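/- Asymptotics of the confluent hypergeometric function for large negative argument: fix real numbers a, b with b > a > 0, and define ₁F₁(a;b;z) := (Γ(b)/(Γ(a)Γ(b-a))) ∫₀¹ e^{z u} u^{a-1}(1-u)^{b-a-1} du. Then as β → -∞, ₁F₁(a;b;β) - (Γ(b)/Γ(b-a))·|β|^{-a}·(1 - a(b-a-1)/|β|) = O(|β|^{-a-2}); that is, there exist M > 0 and β₀ > 0 such that for all β ≤ -β₀, |₁F₁(a;b;β) - (Γ(b)/Γ(b-a))|β|^{-a}(1 - a(b-a-1)/|β|)| ≤ M·|β|^{-a-2}. -/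

import Mathlib

open Real Filter Topology MeasureTheory Set


lemma myPow_le_exp (x : ℝ) (hx : 0 ≤ x) (n : ℕ) : x ^ n / Nat.factorial n ≤ Real.exp x := by
  have h := Real.sum_le_exp_of_nonneg hx (n + 1)
  refine le_trans ?_ h
  have := Finset.single_le_sum (f := fun i : ℕ => x ^ i / Nat.factorial i)
    (fun i _ => by positivity) (Finset.self_mem_range_succ n)
  simpa using this

lemma myExpDecay (a : ℝ) (ha : 0 ≤ a) :
    ∃ C : ℝ, 0 ≤ C ∧ ∀ l : ℝ, 2 ≤ l → Real.exp (-(l / 4)) ≤ C * l ^ (-a - 2) := by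
  set n : ℕ := ⌈a⌉₊ + 2 with hn
  refine ⟨(Nat.factorial n : ℝ) * 4 ^ n, by positivity, fun l hl => ?_⟩
  have hl0 : (0:ℝ) < l := by linarith
  have hl1 : (1:ℝ) ≤ l := by linarith
  have h1 : Real.exp (-(l / 4)) ≤ (Nat.factorial n : ℝ) * 4 ^ n / l ^ n := by
    rw [Real.exp_neg]
    rw [inv_le_comm₀ (Real.exp_pos _) (by positivity), inv_div]
    have h2 := myPow_le_exp (l / 4) (by positivity) n
    calc l ^ n / ((Nat.factorial n : ℝ) * 4 ^ n) = (l / 4) ^ n / Nat.factorial n := by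
          rw [div_pow]; ring
      _ ≤ Real.exp (l / 4) := h2
  calc Real.exp (-(l / 4)) ≤ (Nat.factorial n : ℝ) * 4 ^ n / l ^ n := h1
    _ = (Nat.factorial n : ℝ) * 4 ^ n * l ^ (-(n : ℝ)) := by
        rw [Real.rpow_neg hl0.le, Real.rpow_natCast, div_eq_mul_inv]
    _ ≤ (Nat.factorial n : ℝ) * 4 ^ n * l ^ (-a - 2) := by
        have hna : a + 2 ≤ (n : ℝ) := by
          have := Nat.le_ceil a
          push_cast [hn]
          linarith
        have := Real.rpow_le_rpow_of_exponent_le hl1 (by linarith : -(n:ℝ) ≤ -a - 2)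
        have hpos : (0:ℝ) ≤ (Nat.factorial n : ℝ) * 4 ^ n := by positivity
        exact mul_le_mul_of_nonneg_left this hpos

lemma myGammaInt {s l : ℝ} (hs : 0 < s) (hl : 0 < l) :
    IntegrableOn (fun u : ℝ => Real.exp (-(l * u)) * u ^ (s - 1)) (Ioi 0) := by
  have h0 : IntegrableOn (fun x : ℝ => Real.exp (-x) * x ^ (s - 1)) (Ioi 0) :=
    Real.GammaIntegral_convergent hs
  have h1 : IntegrableOn (fun x : ℝ => Real.exp (-(l * x)) * (l * x) ^ (s - 1)) (Ioi 0) := by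
    have := (integrableOn_Ioi_comp_mul_left_iff
      (fun x : ℝ => Real.exp (-x) * x ^ (s - 1)) 0 hl).mpr (by simpa using h0)
    simpa using this
  have h2 := h1.const_mul ((l : ℝ) ^ (s - 1))⁻¹
  apply h2.congr
  filter_upwards [ae_restrict_mem measurableSet_Ioi] with x hx
  have hx0 : (0:ℝ) < x := hx
  rw [Real.mul_rpow hl.le hx0.le]
  field_simp [ne_of_gt (Real.rpow_pos_of_pos hl (s - 1))]

lemma myGammaVal {s l : ℝ} (hs : 0 < s) (hl : 0 < l) :
    (∫ u in Ioi (0:ℝ), Real.exp (-(l * u)) * u ^ (s - 1)) = Real.Gamma s * l ^ (-s) := by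
  have h := integral_rpow_mul_exp_neg_mul_Ioi hs hl
  rw [show (∫ u in Ioi (0:ℝ), Real.exp (-(l * u)) * u ^ (s - 1))
      = ∫ t in Ioi (0:ℝ), t ^ (s - 1) * Real.exp (-(l * t)) from by
    refine setIntegral_congr_fun measurableSet_Ioi fun x _ => ?_; ring, h]
  rw [one_div, Real.inv_rpow hl.le, ← Real.rpow_neg hl.le, mul_comm]

lemma myBase (p t : ℝ) (ht : t ∈ Icc (0:ℝ) (1/2)) : (1 - t) ^ p ≤ max 1 ((2:ℝ) ^ (-p)) := by
  rcases le_or_gt 0 p with hp | hp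
  · exact le_max_of_le_left (Real.rpow_le_one (by linarith [ht.1, ht.2]) (by linarith [ht.1]) hp)
  · refine le_max_of_le_right ?_
    have h2 : (1 - t) ^ p ≤ ((1:ℝ)/2) ^ p :=
      Real.rpow_le_rpow_of_nonpos (by norm_num) (by linarith [ht.2]) hp.le
    calc (1 - t) ^ p ≤ ((1:ℝ)/2) ^ p := h2
      _ = (2:ℝ) ^ (-p) := by
        rw [one_div, Real.inv_rpow (by norm_num), ← Real.rpow_neg (by norm_num)]

lemma myDeriv (p t : ℝ) (ht : 1 - t ≠ 0) :
    HasDerivAt (fun x : ℝ => (1 - x) ^ p) (p * (1 - t) ^ (p - 1) * (-1)) t := by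
  have h1 : HasDerivAt (fun x : ℝ => 1 - x) (-1) t := by
    simpa using (hasDerivAt_id t).const_sub 1
  exact (Real.hasDerivAt_rpow_const (p := p) (Or.inl ht)).comp t h1

lemma myTaylor (c : ℝ) : ∃ K : ℝ, 0 ≤ K ∧ ∀ u ∈ Icc (0:ℝ) (1/2),
    |(1 - u) ^ (c - 1) - 1 + (c - 1) * u| ≤ K * u ^ 2 := by
  set D : ℝ := |c - 2| * max 1 ((2:ℝ) ^ (-(c - 3))) with hD
  have hD0 : 0 ≤ D := by positivity
  have hne : ∀ x : ℝ, x ∈ Icc (0:ℝ) (1/2) → 1 - x ≠ 0 := by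
    intro x hx h
    have : x = 1 := by linarith [sub_eq_zero.mp h]
    linarith [hx.2]
  -- Step 1 : |(1-t)^(c-2) - 1| ≤ D * t on Icc 0 (1/2)
  have hder1 : ∀ x ∈ Icc (0:ℝ) (1/2),
      HasDerivWithinAt (fun y : ℝ => (1 - y) ^ (c - 2))
        ((c - 2) * (1 - x) ^ (c - 3) * (-1)) (Icc (0:ℝ) (1/2)) x := by
    intro x hx
    have h := myDeriv (c - 2) x (hne x hx)
    rw [show c - 2 - 1 = c - 3 by ring] at h
    exact h.hasDerivWithinAt
  have step1 : ∀ t ∈ Icc (0:ℝ) (1/2), |(1 - t) ^ (c - 2) - 1| ≤ D * t := by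
    intro t ht
    have bound : ∀ x ∈ Icc (0:ℝ) (1/2), ‖(c - 2) * (1 - x) ^ (c - 3) * (-1)‖ ≤ D := by
      intro x hx
      have hb := myBase (c - 3) x hx
      have he : ‖(c - 2) * (1 - x) ^ (c - 3) * (-1)‖ = |c - 2| * (1 - x) ^ (c - 3) := by
        rw [Real.norm_eq_abs, abs_mul, abs_mul]
        simp [abs_of_nonneg (Real.rpow_nonneg (by linarith [hx.2] : (0:ℝ) ≤ 1 - x) (c - 3))]
      rw [he]
      exact mul_le_mul_of_nonneg_left hb (abs_nonneg _)
    have key := (convex_Icc (0:ℝ) (1/2)).norm_image_sub_le_of_norm_hasDerivWithin_le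
      hder1 bound (left_mem_Icc.2 (by norm_num)) ht
    simpa [Real.one_rpow, abs_of_nonneg ht.1] using key
  refine ⟨|c - 1| * D, by positivity, fun u hu => ?_⟩
  have husub : Icc (0:ℝ) u ⊆ Icc (0:ℝ) (1/2) := Icc_subset_Icc le_rfl hu.2
  have hder2 : ∀ x ∈ Icc (0:ℝ) u,
      HasDerivWithinAt (fun y : ℝ => (1 - y) ^ (c - 1) - 1 + (c - 1) * y)
        ((c - 1) * (1 - (1 - x) ^ (c - 2))) (Icc (0:ℝ) u) x := by
    intro x hx
    have h1 := (myDeriv (c - 1) x (hne x (husub hx))).sub_const 1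
    have h2 : HasDerivAt (fun y : ℝ => (c - 1) * y) (c - 1) x := by
      simpa using (hasDerivAt_id x).const_mul (c - 1)
    have h3 := h1.add h2
    have h4 : (c - 1) * (1 - x) ^ (c - 1 - 1) * (-1) + (c - 1)
        = (c - 1) * (1 - (1 - x) ^ (c - 2)) := by
      rw [show c - 1 - 1 = c - 2 by ring]; ring
    rw [h4] at h3
    exact h3.hasDerivWithinAt
  have bound2 : ∀ x ∈ Icc (0:ℝ) u,
      ‖(c - 1) * (1 - (1 - x) ^ (c - 2))‖ ≤ |c - 1| * D * u := by
    intro x hx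
    have h1 := step1 x (husub hx)
    rw [Real.norm_eq_abs, abs_mul]
    have h2 : |1 - (1 - x) ^ (c - 2)| ≤ D * x := by rw [abs_sub_comm]; exact h1
    calc |c - 1| * |1 - (1 - x) ^ (c - 2)| ≤ |c - 1| * (D * x) :=
          mul_le_mul_of_nonneg_left h2 (abs_nonneg _)
      _ ≤ |c - 1| * (D * u) :=
          mul_le_mul_of_nonneg_left (mul_le_mul_of_nonneg_left hx.2 hD0) (abs_nonneg _)
      _ = |c - 1| * D * u := by ring
  have key := (convex_Icc (0:ℝ) u).norm_image_sub_le_of_norm_hasDerivWithin_le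
    hder2 bound2 (left_mem_Icc.2 hu.1) (right_mem_Icc.2 hu.1)
  have h5 : |(1 - u) ^ (c - 1) - 1 + (c - 1) * u| ≤ |c - 1| * D * u * |u| := by
    simpa [Real.one_rpow] using key
  calc |(1 - u) ^ (c - 1) - 1 + (c - 1) * u| ≤ |c - 1| * D * u * |u| := h5
    _ = |c - 1| * D * u ^ 2 := by rw [abs_of_nonneg hu.1]; ring

lemma myBetaInt {a c : ℝ} (ha : 0 < a) (hc : 0 < c) :
    IntegrableOn (fun u : ℝ => u ^ (a - 1) * (1 - u) ^ (c - 1)) (Ioc 0 1) := by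
  rw [← intervalIntegrable_iff_integrableOn_Ioc_of_le zero_le_one]
  have left : IntervalIntegrable (fun u : ℝ => u ^ (a - 1) * (1 - u) ^ (c - 1))
      volume 0 (1/2) := by
    apply IntervalIntegrable.mul_continuousOn
    · exact intervalIntegral.intervalIntegrable_rpow' (by linarith)
    · apply ContinuousOn.rpow_const
      · exact (continuous_const.sub continuous_id).continuousOn
      · intro x hx
        rw [uIcc_of_le (by norm_num : (0:ℝ) ≤ 1/2)] at hx
        left
        intro h
        have : x = 1 := by linarith [sub_eq_zero.mp h]
        linarith [hx.2]
  have right : IntervalIntegrable (fun u : ℝ => u ^ (a - 1) * (1 - u) ^ (c - 1))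
      volume (1/2) 1 := by
    have base : IntervalIntegrable (fun x : ℝ => x ^ (c - 1)) volume 0 (1/2) :=
      intervalIntegral.intervalIntegrable_rpow' (by linarith)
    have refl : IntervalIntegrable (fun x : ℝ => (1 - x) ^ (c - 1)) volume (1/2) 1 := by
      have := base.comp_sub_left 1
      norm_num at this
      exact this.symm
    apply IntervalIntegrable.continuousOn_mul refl
    apply ContinuousOn.rpow_const
    · exact continuous_id.continuousOn
    · intro x hx
      rw [uIcc_of_le (by norm_num : (1:ℝ)/2 ≤ 1)] at hx
      left
      intro h
      rw [h] at hx
      norm_num at hx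
  exact left.trans right

set_option maxHeartbeats 2000000 in
lemma myCore {a c : ℝ} (ha : 0 < a) (hc : 0 < c) :
    ∃ C : ℝ, 0 ≤ C ∧ ∀ l : ℝ, 2 ≤ l →
      |(∫ u in (0:ℝ)..1, Real.exp (-(l * u)) * u ^ (a - 1) * (1 - u) ^ (c - 1))
          - Real.Gamma a * l ^ (-a) + (c - 1) * (Real.Gamma (a + 1) * l ^ (-a - 1))| ≤
        C * l ^ (-a - 2) := by
  obtain ⟨K, hK0, hK⟩ := myTaylor c
  obtain ⟨Ce, hCe0, hCe⟩ := myExpDecay a ha.le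
  set B : ℝ := ∫ u in Ioc (0:ℝ) 1, u ^ (a - 1) * (1 - u) ^ (c - 1) with hBdef
  have hB0 : 0 ≤ B := by
    apply setIntegral_nonneg measurableSet_Ioc
    intro x hx
    have h1 : 0 < x := hx.1
    have h2 : (0:ℝ) ≤ 1 - x := by linarith [hx.2]
    positivity
  refine ⟨K * Real.Gamma (a + 2) + (B + Real.Gamma a + |c - 1| * Real.Gamma (a + 1)) * Ce,
    by positivity, fun l hl => ?_⟩
  have hl0 : (0:ℝ) < l := by linarith
  have hl20 : (0:ℝ) < l / 2 := by linarith
  -- the functions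
  set f : ℝ → ℝ := fun u => Real.exp (-(l * u)) * u ^ (a - 1) * (1 - u) ^ (c - 1) with hf
  set g1 : ℝ → ℝ := fun u => Real.exp (-(l * u)) * u ^ (a - 1) with hg1
  set g2 : ℝ → ℝ := fun u => Real.exp (-(l * u)) * u ^ (a + 1 - 1) with hg2
  set w : ℝ → ℝ := fun u => Real.exp (-(l * u)) * u ^ (a + 2 - 1) with hw
  -- integrability
  have ig1 : IntegrableOn g1 (Ioi 0) := myGammaInt ha hl0
  have ig2 : IntegrableOn g2 (Ioi 0) := myGammaInt (by linarith) hl0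
  have iw : IntegrableOn w (Ioi 0) := myGammaInt (by linarith) hl0
  have ibeta : IntegrableOn (fun u : ℝ => u ^ (a - 1) * (1 - u) ^ (c - 1)) (Ioc 0 1) :=
    myBetaInt ha hc
  have hfm : AEStronglyMeasurable f (volume.restrict (Ioc 0 1)) := by
    have h1 : AEStronglyMeasurable (fun u : ℝ => Real.exp (-(l * u))) (volume.restrict (Ioc 0 1)) :=
      (Real.continuous_exp.comp (continuous_const.mul continuous_id).neg).aestronglyMeasurable
    have h2 := h1.mul ibeta.1
    apply h2.congr
    filter_upwards with x
    simp only [hf, Pi.mul_apply]; ring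
  have if1 : IntegrableOn f (Ioc 0 1) := by
    apply Integrable.mono' ibeta hfm
    filter_upwards [ae_restrict_mem measurableSet_Ioc] with x hx
    have h1 : 0 < x := hx.1
    have h2 : (0:ℝ) ≤ 1 - x := by linarith [hx.2]
    have h3 : Real.exp (-(l * x)) ≤ 1 := Real.exp_le_one_iff.mpr (by nlinarith)
    rw [hf, Real.norm_eq_abs]
    rw [abs_of_nonneg (by positivity)]
    calc Real.exp (-(l * x)) * x ^ (a - 1) * (1 - x) ^ (c - 1)
        ≤ 1 * x ^ (a - 1) * (1 - x) ^ (c - 1) := by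
          have h4 : (0:ℝ) ≤ x ^ (a - 1) := Real.rpow_nonneg h1.le _
          have h5 : (0:ℝ) ≤ (1 - x) ^ (c - 1) := Real.rpow_nonneg h2 _
          gcongr
      _ = x ^ (a - 1) * (1 - x) ^ (c - 1) := by ring
  -- restricted integrabilities
  have hsub1 : Ioc (0:ℝ) (1/2) ⊆ Ioc 0 1 := Ioc_subset_Ioc le_rfl (by norm_num)
  have hsub2 : Ioc (1/2:ℝ) 1 ⊆ Ioc 0 1 := Ioc_subset_Ioc (by norm_num) le_rfl
  have hsub3 : Ioc (0:ℝ) (1/2) ⊆ Ioi 0 := Ioc_subset_Ioi_self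
  have hsub4 : Ioi (1/2:ℝ) ⊆ Ioi 0 := Ioi_subset_Ioi (by norm_num)
  have if1a : IntegrableOn f (Ioc 0 (1/2)) := if1.mono_set hsub1
  have if1b : IntegrableOn f (Ioc (1/2) 1) := if1.mono_set hsub2
  have ig1a : IntegrableOn g1 (Ioc 0 (1/2)) := ig1.mono_set hsub3
  have ig1c : IntegrableOn g1 (Ioi (1/2)) := ig1.mono_set hsub4
  have ig2a : IntegrableOn g2 (Ioc 0 (1/2)) := ig2.mono_set hsub3
  have ig2c : IntegrableOn g2 (Ioi (1/2)) := ig2.mono_set hsub4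
  -- splittings
  have hs1 : ∫ u in Ioc (0:ℝ) 1, f u = (∫ u in Ioc (0:ℝ) (1/2), f u) + ∫ u in Ioc (1/2:ℝ) 1, f u := by
    rw [← setIntegral_union (Ioc_disjoint_Ioc_of_le le_rfl) measurableSet_Ioc if1a if1b,
      Ioc_union_Ioc_eq_Ioc (by norm_num) (by norm_num)]
  have hs2 : ∫ u in Ioi (0:ℝ), g1 u = (∫ u in Ioc (0:ℝ) (1/2), g1 u) + ∫ u in Ioi (1/2:ℝ), g1 u := by
    rw [← setIntegral_union Ioc_disjoint_Ioi_same measurableSet_Ioi ig1a ig1c,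
      Ioc_union_Ioi_eq_Ioi (by norm_num)]
  have hs3 : ∫ u in Ioi (0:ℝ), g2 u = (∫ u in Ioc (0:ℝ) (1/2), g2 u) + ∫ u in Ioi (1/2:ℝ), g2 u := by
    rw [← setIntegral_union Ioc_disjoint_Ioi_same measurableSet_Ioi ig2a ig2c,
      Ioc_union_Ioi_eq_Ioi (by norm_num)]
  -- Gamma values
  have hv1 : Real.Gamma a * l ^ (-a) = ∫ u in Ioi (0:ℝ), g1 u := (myGammaVal ha hl0).symm
  have hv2 : Real.Gamma (a + 1) * l ^ (-a - 1) = ∫ u in Ioi (0:ℝ), g2 u := by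
    rw [show (-a - 1 : ℝ) = -(a+1) by ring]
    exact (myGammaVal (by linarith : (0:ℝ) < a + 1) hl0).symm
  have hI : (∫ u in (0:ℝ)..1, Real.exp (-(l * u)) * u ^ (a - 1) * (1 - u) ^ (c - 1))
      = ∫ u in Ioc (0:ℝ) 1, f u := intervalIntegral.integral_of_le zero_le_one
  -- combine the near-zero pieces
  set T1 : ℝ := ∫ u in Ioc (0:ℝ) (1/2), (f u - g1 u + (c - 1) * g2 u) with hT1def
  have hT1eq : T1 = ((∫ u in Ioc (0:ℝ) (1/2), f u) - ∫ u in Ioc (0:ℝ) (1/2), g1 u)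
      + (c - 1) * ∫ u in Ioc (0:ℝ) (1/2), g2 u := by
    rw [hT1def,
      integral_add (f := fun u => f u - g1 u) (g := fun u => (c - 1) * g2 u)
        (if1a.sub ig1a) (ig2a.const_mul _),
      integral_sub if1a ig1a, integral_const_mul]
  set F2 : ℝ := ∫ u in Ioc (1/2:ℝ) 1, f u with hF2
  set G3 : ℝ := ∫ u in Ioi (1/2:ℝ), g1 u with hG3
  set G4 : ℝ := ∫ u in Ioi (1/2:ℝ), g2 u with hG4
  have hE : (∫ u in (0:ℝ)..1, Real.exp (-(l * u)) * u ^ (a - 1) * (1 - u) ^ (c - 1))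
        - Real.Gamma a * l ^ (-a) + (c - 1) * (Real.Gamma (a + 1) * l ^ (-a - 1))
      = T1 + F2 - G3 + (c - 1) * G4 := by
    rw [hI, hv1, hv2, hs1, hs2, hs3, hT1eq]; ring
  rw [hE]
  have habs : |T1 + F2 - G3 + (c - 1) * G4| ≤ |T1| + |F2| + |G3| + |c - 1| * |G4| := by
    have h1 := abs_add_le (T1 + F2 - G3) ((c - 1) * G4)
    have h2 := abs_add_le (T1 + F2) (-G3)
    have h3 := abs_add_le T1 F2
    rw [abs_neg] at h2
    rw [abs_mul] at h1
    have h4 : T1 + F2 - G3 = T1 + F2 + -G3 := by ring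
    rw [h4] at h1
    calc |T1 + F2 + -G3 + (c-1) * G4| ≤ |T1 + F2 + -G3| + |c-1| * |G4| := h1
      _ ≤ (|T1 + F2| + |G3|) + |c-1| * |G4| := by linarith
      _ ≤ |T1| + |F2| + |G3| + |c-1| * |G4| := by linarith
  -- bound 1
  have iwa : IntegrableOn w (Ioc 0 (1/2)) := iw.mono_set hsub3
  have ih : IntegrableOn (fun u => f u - g1 u + (c - 1) * g2 u) (Ioc 0 (1/2)) :=
    (if1a.sub ig1a).add (ig2a.const_mul _)
  have hb1 : |T1| ≤ K * (Real.Gamma (a + 2) * l ^ (-(a + 2))) := by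
    have h1 : |T1| ≤ ∫ u in Ioc (0:ℝ) (1/2), |f u - g1 u + (c - 1) * g2 u| := by
      rw [hT1def, ← Real.norm_eq_abs]
      simpa only [Real.norm_eq_abs] using
        norm_integral_le_integral_norm (μ := volume.restrict (Ioc (0:ℝ) (1/2)))
          (fun u => f u - g1 u + (c - 1) * g2 u)
    have h2 : (∫ u in Ioc (0:ℝ) (1/2), |f u - g1 u + (c - 1) * g2 u|)
        ≤ ∫ u in Ioc (0:ℝ) (1/2), K * w u := by
      apply setIntegral_mono_on ih.abs (iwa.const_mul K) measurableSet_Ioc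
      intro x hx
      have hx0 : (0:ℝ) < x := hx.1
      have hx2 : x ≤ 1/2 := hx.2
      have e1 : x ^ (a + 1 - 1) = x ^ (a - 1) * x := by
        rw [show a + 1 - 1 = (a - 1) + 1 by ring, Real.rpow_add_one hx0.ne']
      have e2 : x ^ (a + 2 - 1) = x ^ (a - 1) * x * x := by
        rw [show a + 2 - 1 = ((a - 1) + 1) + 1 by ring, Real.rpow_add_one hx0.ne',
          Real.rpow_add_one hx0.ne']
      have hfac : f x - g1 x + (c - 1) * g2 x
          = Real.exp (-(l * x)) * x ^ (a - 1) * ((1 - x) ^ (c - 1) - 1 + (c - 1) * x) := by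
        simp only [hf, hg1, hg2, e1]; ring
      have hT := hK x ⟨hx0.le, hx2⟩
      have hnn : (0:ℝ) ≤ Real.exp (-(l * x)) * x ^ (a - 1) := by positivity
      rw [hfac]
      calc |Real.exp (-(l * x)) * x ^ (a - 1) * ((1 - x) ^ (c - 1) - 1 + (c - 1) * x)|
          = Real.exp (-(l * x)) * x ^ (a - 1) * |(1 - x) ^ (c - 1) - 1 + (c - 1) * x| := by
            rw [abs_mul, abs_of_nonneg hnn]
        _ ≤ Real.exp (-(l * x)) * x ^ (a - 1) * (K * x ^ 2) := mul_le_mul_of_nonneg_left hT hnn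
        _ = K * w x := by simp only [hw, e2]; rw [pow_two]; ring
    have h3 : (∫ u in Ioc (0:ℝ) (1/2), K * w u) = K * ∫ u in Ioc (0:ℝ) (1/2), w u :=
      integral_const_mul _ _
    have h4 : (∫ u in Ioc (0:ℝ) (1/2), w u) ≤ ∫ u in Ioi (0:ℝ), w u := by
      apply setIntegral_mono_set iw ?_ hsub3.eventuallyLE
      filter_upwards [ae_restrict_mem measurableSet_Ioi] with x hx
      have hx0 : (0:ℝ) < x := hx
      simp only [hw]
      positivity
    have h5 : (∫ u in Ioi (0:ℝ), w u) = Real.Gamma (a + 2) * l ^ (-(a + 2)) :=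
      myGammaVal (by linarith) hl0
    calc |T1| ≤ ∫ u in Ioc (0:ℝ) (1/2), |f u - g1 u + (c - 1) * g2 u| := h1
      _ ≤ ∫ u in Ioc (0:ℝ) (1/2), K * w u := h2
      _ = K * ∫ u in Ioc (0:ℝ) (1/2), w u := h3
      _ ≤ K * ∫ u in Ioi (0:ℝ), w u := mul_le_mul_of_nonneg_left h4 hK0
      _ = K * (Real.Gamma (a + 2) * l ^ (-(a + 2))) := by rw [h5]
  -- bound 2
  have hb2 : |F2| ≤ Real.exp (-(l / 4)) * B := by
    have h1 : |F2| ≤ ∫ u in Ioc (1/2:ℝ) 1, |f u| := by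
      rw [hF2, ← Real.norm_eq_abs]
      simpa only [Real.norm_eq_abs] using
        norm_integral_le_integral_norm (μ := volume.restrict (Ioc (1/2:ℝ) 1)) f
    have h2 : (∫ u in Ioc (1/2:ℝ) 1, |f u|)
        ≤ ∫ u in Ioc (1/2:ℝ) 1, Real.exp (-(l / 2)) * (u ^ (a - 1) * (1 - u) ^ (c - 1)) := by
      apply setIntegral_mono_on if1b.abs ((ibeta.mono_set hsub2).const_mul _) measurableSet_Ioc
      intro x hx
      have hx1 : (1/2:ℝ) < x := hx.1
      have hx2 : x ≤ 1 := hx.2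
      have hx0 : (0:ℝ) < x := by linarith
      have h1x : (0:ℝ) ≤ 1 - x := by linarith
      have hee : Real.exp (-(l * x)) ≤ Real.exp (-(l / 2)) := by
        apply Real.exp_le_exp.mpr; nlinarith
      have : |f x| = Real.exp (-(l * x)) * x ^ (a - 1) * (1 - x) ^ (c - 1) := by
        simp only [hf]
        exact abs_of_nonneg (by positivity)
      rw [this]
      have hbn : (0:ℝ) ≤ x ^ (a - 1) * (1 - x) ^ (c - 1) := by positivity
      calc Real.exp (-(l * x)) * x ^ (a - 1) * (1 - x) ^ (c - 1)
          = Real.exp (-(l * x)) * (x ^ (a - 1) * (1 - x) ^ (c - 1)) := by ring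
        _ ≤ Real.exp (-(l / 2)) * (x ^ (a - 1) * (1 - x) ^ (c - 1)) :=
            mul_le_mul_of_nonneg_right hee hbn
    have h3 : (∫ u in Ioc (1/2:ℝ) 1, Real.exp (-(l / 2)) * (u ^ (a - 1) * (1 - u) ^ (c - 1)))
        = Real.exp (-(l / 2)) * ∫ u in Ioc (1/2:ℝ) 1, u ^ (a - 1) * (1 - u) ^ (c - 1) :=
      integral_const_mul _ _
    have h4 : (∫ u in Ioc (1/2:ℝ) 1, u ^ (a - 1) * (1 - u) ^ (c - 1)) ≤ B := by
      rw [hBdef]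
      apply setIntegral_mono_set ibeta ?_ hsub2.eventuallyLE
      filter_upwards [ae_restrict_mem measurableSet_Ioc] with x hx
      have hx0 : (0:ℝ) < x := hx.1
      have h1x : (0:ℝ) ≤ 1 - x := by linarith [hx.2]
      positivity
    have h5 : Real.exp (-(l / 2)) ≤ Real.exp (-(l / 4)) := Real.exp_le_exp.mpr (by linarith)
    calc |F2| ≤ ∫ u in Ioc (1/2:ℝ) 1, |f u| := h1
      _ ≤ ∫ u in Ioc (1/2:ℝ) 1, Real.exp (-(l / 2)) * (u ^ (a - 1) * (1 - u) ^ (c - 1)) := h2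
      _ = Real.exp (-(l / 2)) * ∫ u in Ioc (1/2:ℝ) 1, u ^ (a - 1) * (1 - u) ^ (c - 1) := h3
      _ ≤ Real.exp (-(l / 2)) * B := mul_le_mul_of_nonneg_left h4 (Real.exp_nonneg _)
      _ ≤ Real.exp (-(l / 4)) * B := mul_le_mul_of_nonneg_right h5 hB0
  -- tails
  have tail : ∀ s : ℝ, 0 < s →
      |∫ u in Ioi (1/2:ℝ), Real.exp (-(l * u)) * u ^ (s - 1)| ≤
        Real.exp (-(l / 4)) * Real.Gamma s := by
    intro s hs
    have ig := myGammaInt hs hl0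
    have igh := myGammaInt hs hl20
    have igc : IntegrableOn (fun u : ℝ => Real.exp (-(l * u)) * u ^ (s - 1)) (Ioi (1/2)) :=
      ig.mono_set hsub4
    have ighc : IntegrableOn (fun u : ℝ => Real.exp (-(l / 2 * u)) * u ^ (s - 1)) (Ioi (1/2)) :=
      igh.mono_set hsub4
    have h1 : |∫ u in Ioi (1/2:ℝ), Real.exp (-(l * u)) * u ^ (s - 1)|
        ≤ ∫ u in Ioi (1/2:ℝ), |Real.exp (-(l * u)) * u ^ (s - 1)| := by
      rw [← Real.norm_eq_abs]
      simpa only [Real.norm_eq_abs] using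
        norm_integral_le_integral_norm (μ := volume.restrict (Ioi (1/2:ℝ)))
          (fun u : ℝ => Real.exp (-(l * u)) * u ^ (s - 1))
    have h2 : (∫ u in Ioi (1/2:ℝ), |Real.exp (-(l * u)) * u ^ (s - 1)|)
        ≤ ∫ u in Ioi (1/2:ℝ), Real.exp (-(l / 4)) * (Real.exp (-(l / 2 * u)) * u ^ (s - 1)) := by
      apply setIntegral_mono_on igc.abs (ighc.const_mul _) measurableSet_Ioi
      intro x hx
      have hx1 : (1/2:ℝ) < x := hx
      have hx0 : (0:ℝ) < x := by linarith
      have hee : Real.exp (-(l * x)) = Real.exp (-(l / 2 * x)) * Real.exp (-(l / 2 * x)) := by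
        rw [← Real.exp_add]; congr 1; ring
      have he2 : Real.exp (-(l / 2 * x)) ≤ Real.exp (-(l / 4)) := by
        apply Real.exp_le_exp.mpr; nlinarith
      have habs : |Real.exp (-(l * x)) * x ^ (s - 1)| = Real.exp (-(l * x)) * x ^ (s - 1) :=
        abs_of_nonneg (by positivity)
      rw [habs, hee]
      have hrp : (0:ℝ) ≤ Real.exp (-(l / 2 * x)) * x ^ (s - 1) := by positivity
      calc Real.exp (-(l / 2 * x)) * Real.exp (-(l / 2 * x)) * x ^ (s - 1)
          = Real.exp (-(l / 2 * x)) * (Real.exp (-(l / 2 * x)) * x ^ (s - 1)) := by ring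
        _ ≤ Real.exp (-(l / 4)) * (Real.exp (-(l / 2 * x)) * x ^ (s - 1)) :=
            mul_le_mul_of_nonneg_right he2 hrp
    have h3 : (∫ u in Ioi (1/2:ℝ), Real.exp (-(l / 4)) * (Real.exp (-(l / 2 * u)) * u ^ (s - 1)))
        = Real.exp (-(l / 4)) * ∫ u in Ioi (1/2:ℝ), Real.exp (-(l / 2 * u)) * u ^ (s - 1) :=
      integral_const_mul _ _
    have h4 : (∫ u in Ioi (1/2:ℝ), Real.exp (-(l / 2 * u)) * u ^ (s - 1))
        ≤ ∫ u in Ioi (0:ℝ), Real.exp (-(l / 2 * u)) * u ^ (s - 1) := by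
      apply setIntegral_mono_set igh ?_ hsub4.eventuallyLE
      filter_upwards [ae_restrict_mem measurableSet_Ioi] with x hx
      have hx0 : (0:ℝ) < x := hx
      positivity
    have h5 : (∫ u in Ioi (0:ℝ), Real.exp (-(l / 2 * u)) * u ^ (s - 1))
        = Real.Gamma s * (l / 2) ^ (-s) := myGammaVal hs hl20
    have h6 : Real.Gamma s * (l / 2) ^ (-s) ≤ Real.Gamma s := by
      have hle1 : (l / 2) ^ (-s) ≤ 1 :=
        Real.rpow_le_one_of_one_le_of_nonpos (by linarith) (by linarith)
      nlinarith [Real.Gamma_pos_of_pos hs, Real.rpow_nonneg (by linarith : (0:ℝ) ≤ l/2) (-s)]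
    calc |∫ u in Ioi (1/2:ℝ), Real.exp (-(l * u)) * u ^ (s - 1)|
        ≤ ∫ u in Ioi (1/2:ℝ), |Real.exp (-(l * u)) * u ^ (s - 1)| := h1
      _ ≤ ∫ u in Ioi (1/2:ℝ), Real.exp (-(l / 4)) * (Real.exp (-(l / 2 * u)) * u ^ (s - 1)) := h2
      _ = Real.exp (-(l / 4)) * ∫ u in Ioi (1/2:ℝ), Real.exp (-(l / 2 * u)) * u ^ (s - 1) := h3
      _ ≤ Real.exp (-(l / 4)) * ∫ u in Ioi (0:ℝ), Real.exp (-(l / 2 * u)) * u ^ (s - 1) :=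
          mul_le_mul_of_nonneg_left h4 (Real.exp_nonneg _)
      _ = Real.exp (-(l / 4)) * (Real.Gamma s * (l / 2) ^ (-s)) := by rw [h5]
      _ ≤ Real.exp (-(l / 4)) * Real.Gamma s :=
          mul_le_mul_of_nonneg_left h6 (Real.exp_nonneg _)
  have hb3 : |G3| ≤ Real.exp (-(l / 4)) * Real.Gamma a := by
    rw [hG3]; simp only [hg1]; exact tail a ha
  have hb4 : |G4| ≤ Real.exp (-(l / 4)) * Real.Gamma (a + 1) := by
    rw [hG4]; simp only [hg2]; exact tail (a + 1) (by linarith)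
  -- final combination
  have hGam : (0:ℝ) ≤ B + Real.Gamma a + |c - 1| * Real.Gamma (a + 1) := by positivity
  calc |T1 + F2 - G3 + (c - 1) * G4| ≤ |T1| + |F2| + |G3| + |c - 1| * |G4| := habs
    _ ≤ K * (Real.Gamma (a + 2) * l ^ (-(a + 2))) + Real.exp (-(l / 4)) * B
        + Real.exp (-(l / 4)) * Real.Gamma a
        + |c - 1| * (Real.exp (-(l / 4)) * Real.Gamma (a + 1)) := by
      have := mul_le_mul_of_nonneg_left hb4 (abs_nonneg (c - 1))
      gcongr
    _ = K * Real.Gamma (a + 2) * l ^ (-(a + 2))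
        + (B + Real.Gamma a + |c - 1| * Real.Gamma (a + 1)) * Real.exp (-(l / 4)) := by ring
    _ ≤ K * Real.Gamma (a + 2) * l ^ (-a - 2)
        + (B + Real.Gamma a + |c - 1| * Real.Gamma (a + 1)) * (Ce * l ^ (-a - 2)) := by
      rw [show -(a + 2) = -a - 2 by ring]
      exact add_le_add_right (mul_le_mul_of_nonneg_left (hCe l hl) hGam) _
    _ = (K * Real.Gamma (a + 2)
        + (B + Real.Gamma a + |c - 1| * Real.Gamma (a + 1)) * Ce) * l ^ (-a - 2) := by ring

set_option maxHeartbeats 1000000 in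
/-- Asymptotics of the confluent hypergeometric function
`₁F₁(a;b;z) := (Γ(b)/(Γ(a)Γ(b-a))) ∫₀¹ e^{z u} u^{a-1}(1-u)^{b-a-1} du`
for large negative argument: for `b > a > 0`, as `β → -∞`,
`₁F₁(a;b;β) - (Γ(b)/Γ(b-a))|β|^{-a}(1 - a(b-a-1)/|β|) = O(|β|^{-a-2})`. -/
theorem hyp1F1_asymptotic_neg (a b : ℝ) (ha : 0 < a) (hab : a < b) :
    ∃ M > (0:ℝ), ∃ β₀ > (0:ℝ), ∀ β : ℝ, β ≤ -β₀ →
      |(Real.Gamma b / (Real.Gamma a * Real.Gamma (b - a))) *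
            (∫ u in (0:ℝ)..1, Real.exp (β * u) * u ^ (a - 1) * (1 - u) ^ (b - a - 1)) -
          (Real.Gamma b / Real.Gamma (b - a)) * |β| ^ (-a) * (1 - a * (b - a - 1) / |β|)| ≤
        M * |β| ^ (-a - 2) := by
  have hc : (0:ℝ) < b - a := sub_pos.mpr hab
  obtain ⟨C, hC0, hC⟩ := myCore ha hc
  have hGa : (0:ℝ) < Real.Gamma a := Real.Gamma_pos_of_pos ha
  have hGc : (0:ℝ) < Real.Gamma (b - a) := Real.Gamma_pos_of_pos hc
  have hGb : (0:ℝ) < Real.Gamma b := Real.Gamma_pos_of_pos (by linarith)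
  set P : ℝ := Real.Gamma b / (Real.Gamma a * Real.Gamma (b - a)) with hP
  have hP0 : 0 < P := by positivity
  refine ⟨P * C + 1, by positivity, 2, by norm_num, fun β hβ => ?_⟩
  have hβ0 : β < 0 := by linarith
  set l : ℝ := -β with hldef
  have hl : 2 ≤ l := by simp only [hldef]; linarith
  have hl0 : (0:ℝ) < l := by linarith
  have hbl : |β| = l := by rw [abs_of_neg hβ0]
  have hIc : (∫ u in (0:ℝ)..1, Real.exp (β * u) * u ^ (a - 1) * (1 - u) ^ (b - a - 1))
      = ∫ u in (0:ℝ)..1, Real.exp (-(l * u)) * u ^ (a - 1) * (1 - u) ^ (b - a - 1) := by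
    apply intervalIntegral.integral_congr
    intro u _
    show Real.exp (β * u) * u ^ (a - 1) * (1 - u) ^ (b - a - 1)
        = Real.exp (-(l * u)) * u ^ (a - 1) * (1 - u) ^ (b - a - 1)
    rw [show β * u = -(l * u) by rw [hldef]; ring]
  rw [hbl, hIc]
  set I : ℝ := ∫ u in (0:ℝ)..1, Real.exp (-(l * u)) * u ^ (a - 1) * (1 - u) ^ (b - a - 1)
  have e3 : l ^ (-a - 1) = l ^ (-a) * l⁻¹ := by
    rw [show -a - 1 = -a + (-1) by ring, Real.rpow_add hl0, Real.rpow_neg_one]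
  have eg : Real.Gamma (a + 1) = a * Real.Gamma a := by
    rw [Real.Gamma_add_one ha.ne']
  have key : P * I - Real.Gamma b / Real.Gamma (b - a) * l ^ (-a) * (1 - a * (b - a - 1) / l)
      = P * (I - Real.Gamma a * l ^ (-a)
          + (b - a - 1) * (Real.Gamma (a + 1) * l ^ (-a - 1))) := by
    rw [eg, e3, hP]
    field_simp
    ring
  rw [key, abs_mul, abs_of_nonneg hP0.le]
  have hb := hC l hl
  calc P * |I - Real.Gamma a * l ^ (-a)
        + (b - a - 1) * (Real.Gamma (a + 1) * l ^ (-a - 1))|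
      ≤ P * (C * l ^ (-a - 2)) := mul_le_mul_of_nonneg_left hb hP0.le
    _ ≤ (P * C + 1) * l ^ (-a - 2) := by
        have : (0:ℝ) < l ^ (-a - 2) := Real.rpow_pos_of_pos hl0 _
        nlinarith
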